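/- In the three-step world (u ≠ 0, S₀ > 0, K ∈ ℝ), if the hedge weights satisfy, identically in the eight local-volatility variables, the conditions ∂Λ'(0)/∂α₂^j = 0 for j ∈ {−1,0,1}, ∂Λ'(1)/∂α₂^{−2} = ∂Λ'(−1)/∂α₂^{−2}, and ∂Λ'(1)/∂α₂^{2} = ∂Λ'(−1)/∂α₂^{2}, then necessarily w₃^{−1} = 0, w₃⁰ = 0, w₃¹ = −(1+e^u)K, w₃² = −(1+e^u)²K, and w₃³ = −(1+e^u)(1+e^u+e^{2u})K. -/

import Mathlib

/-- Three-step world, short `K` units of the tractor paying 1 only on the path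
`(0,0,0)`: value of the hedged portfolio after one step to node `(1,j)`, before
re-hedging, as an explicit polynomial in the eight future local volatility
parameters `α₁⁻¹, α₁⁰, α₁¹, α₂⁻², α₂⁻¹, α₂⁰, α₂¹, α₂²`
(`= a1m1, a10, a11, a2m2, a2m1, a20, a21, a22`). The hedge consists of `ω`
stock, `w11` units of `A₁¹`, `w2i` units of `A₂ⁱ` and `w3i` units of `A₃ⁱ`. -/
noncomputable def threeStepPortfolio (u S₀ K ω w11 w20 w21 w22 w3m1 w30 w31 w32 w33 : ℝ)
    (j : ℤ) (a1m1 a10 a11 a2m2 a2m1 a20 a21 a22 : ℝ) : ℝ :=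
  let cu : ℝ := 1 + Real.exp u
  let cd : ℝ := 1 + Real.exp (-u)
  if j = 1 then
    (w11 + a11 / cd * w20 + (1 - a11) * w21 + a11 / cu * w22
      + a11 * a20 / cd ^ 2 * w3m1
      + (a11 * (1 - a20) + (1 - a11) * a21) / cd * w30
      + (a11 * (a22 + a20) / (cu * cd) + (1 - a11) * (1 - a21)) * w31
      + (a11 * (1 - a22) + (1 - a11) * a21) / cu * w32
      + a11 * a22 / cu ^ 2 * w33
      + Real.exp u * ω * S₀)
  else if j = 0 then
    ((1 - a10) * w20 + a10 / cu * w21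
      + (a10 * (1 - a2m1) + (1 - a10) * a20) / cd * w3m1
      + (a10 * (a21 + a2m1) / (cu * cd) + (1 - a10) * (1 - a20)) * w30
      + (a10 * (1 - a21) + (1 - a10) * a20) / cu * w31
      + a10 * a21 / cu ^ 2 * w32
      + ω * S₀ - K * (1 - a10) * (1 - a20))
  else
    (a1m1 / cu * w20
      + (a1m1 * (a20 + a2m2) / (cu * cd) + (1 - a1m1) * (1 - a2m1)) * w3m1
      + (a1m1 * (1 - a20) + (1 - a1m1) * a2m1) / cu * w30
      + a1m1 * a20 / cu ^ 2 * w31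
      + Real.exp (-u) * ω * S₀)

/-- In the three-step world, if the hedge weights satisfy, identically in the
eight local-volatility variables, `∂Λ'(0)/∂α₂ʲ = 0` for `j ∈ {−1,0,1}`,
`∂Λ'(1)/∂α₂⁻² = ∂Λ'(−1)/∂α₂⁻²` and `∂Λ'(1)/∂α₂² = ∂Λ'(−1)/∂α₂²`, then
necessarily `w₃⁻¹ = 0`, `w₃⁰ = 0`, `w₃¹ = −(1+e^u)K`, `w₃² = −(1+e^u)²K`,
and `w₃³ = −(1+e^u)(1+e^u+e^{2u})K`. -/
theorem threeStep_forced_w3_weights (u S₀ K : ℝ) (hu : u ≠ 0) (hS₀ : 0 < S₀)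
    (ω w11 w20 w21 w22 w3m1 w30 w31 w32 w33 : ℝ)
    (L : ℤ → ℝ → ℝ → ℝ → ℝ → ℝ → ℝ → ℝ → ℝ → ℝ)
    (hL : L = threeStepPortfolio u S₀ K ω w11 w20 w21 w22 w3m1 w30 w31 w32 w33)
    (h0m1 : ∀ a1m1 a10 a11 a2m2 a2m1 a20 a21 a22 : ℝ,
      deriv (fun x => L 0 a1m1 a10 a11 a2m2 x a20 a21 a22) a2m1 = 0)
    (h00 : ∀ a1m1 a10 a11 a2m2 a2m1 a20 a21 a22 : ℝ,
      deriv (fun x => L 0 a1m1 a10 a11 a2m2 a2m1 x a21 a22) a20 = 0)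
    (h01 : ∀ a1m1 a10 a11 a2m2 a2m1 a20 a21 a22 : ℝ,
      deriv (fun x => L 0 a1m1 a10 a11 a2m2 a2m1 a20 x a22) a21 = 0)
    (hm2 : ∀ a1m1 a10 a11 a2m2 a2m1 a20 a21 a22 : ℝ,
      deriv (fun x => L 1 a1m1 a10 a11 x a2m1 a20 a21 a22) a2m2 =
      deriv (fun x => L (-1) a1m1 a10 a11 x a2m1 a20 a21 a22) a2m2)
    (hp2 : ∀ a1m1 a10 a11 a2m2 a2m1 a20 a21 a22 : ℝ,
      deriv (fun x => L 1 a1m1 a10 a11 a2m2 a2m1 a20 a21 x) a22 =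
      deriv (fun x => L (-1) a1m1 a10 a11 a2m2 a2m1 a20 a21 x) a22) :
    w3m1 = 0 ∧ w30 = 0 ∧ w31 = -(1 + Real.exp u) * K ∧
      w32 = -(1 + Real.exp u) ^ 2 * K ∧
      w33 = -(1 + Real.exp u) * (1 + Real.exp u + Real.exp (2 * u)) * K := by
  
  subst hL
  set cu : ℝ := 1 + Real.exp u with hcu
  set cd : ℝ := 1 + Real.exp (-u) with hcd
  have hcupos : (0:ℝ) < cu := by positivity
  have hcdpos : (0:ℝ) < cd := by positivity
  have hcu0 : cu ≠ 0 := ne_of_gt hcupos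
  have hcd0 : cd ≠ 0 := ne_of_gt hcdpos
  have hrel : cu = Real.exp u * cd := by
    rw [hcu, hcd]
    rw [mul_add, mul_one, ← Real.exp_add]
    simp [add_comm]
  have key : ∀ (A B p : ℝ), deriv (fun x : ℝ => A * x + B) p = A := by
    intro A B p
    simpa using (((hasDerivAt_id p).const_mul A).add_const B).deriv
  -- E1 : w3m1 = 0
  have h1 := hm2 1 0 0 0 0 0 0 0
  have e1L : (fun x : ℝ => threeStepPortfolio u S₀ K ω w11 w20 w21 w22 w3m1 w30 w31 w32 w33 1 1 0 0 x 0 0 0 0)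
      = fun x : ℝ => (0:ℝ) * x + threeStepPortfolio u S₀ K ω w11 w20 w21 w22 w3m1 w30 w31 w32 w33 1 1 0 0 0 0 0 0 0 := by
    funext x
    simp only [threeStepPortfolio, ← hcu, ← hcd]
    norm_num
  have e1R : (fun x : ℝ => threeStepPortfolio u S₀ K ω w11 w20 w21 w22 w3m1 w30 w31 w32 w33 (-1) 1 0 0 x 0 0 0 0)
      = fun x : ℝ => (w3m1 / (cu * cd)) * x + threeStepPortfolio u S₀ K ω w11 w20 w21 w22 w3m1 w30 w31 w32 w33 (-1) 1 0 0 0 0 0 0 0 := by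
    funext x
    simp only [threeStepPortfolio, ← hcu, ← hcd]
    norm_num
    ring
  rw [e1L, e1R, key, key] at h1
  have hw3m1 : w3m1 = 0 := by
    field_simp at h1
    simpa using h1.symm
  -- E2 : w30 = 0
  have h2 := h0m1 0 1 0 0 0 0 0 0
  have e2 : (fun x : ℝ => threeStepPortfolio u S₀ K ω w11 w20 w21 w22 w3m1 w30 w31 w32 w33 0 0 1 0 0 x 0 0 0)
      = fun x : ℝ => (-w3m1 / cd + w30 / (cu * cd)) * x + threeStepPortfolio u S₀ K ω w11 w20 w21 w22 w3m1 w30 w31 w32 w33 0 0 1 0 0 0 0 0 0 := by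
    funext x
    simp only [threeStepPortfolio, ← hcu, ← hcd]
    norm_num
    ring
  rw [e2, key] at h2
  have hw30 : w30 = 0 := by
    rw [hw3m1] at h2
    field_simp at h2
    simpa using h2
  -- E3 : w31
  have h3 := h00 0 0 0 0 0 0 0 0
  have e3 : (fun x : ℝ => threeStepPortfolio u S₀ K ω w11 w20 w21 w22 w3m1 w30 w31 w32 w33 0 0 0 0 0 0 x 0 0)
      = fun x : ℝ => (w3m1 / cd - w30 + w31 / cu + K) * x + threeStepPortfolio u S₀ K ω w11 w20 w21 w22 w3m1 w30 w31 w32 w33 0 0 0 0 0 0 0 0 0 := by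
    funext x
    simp only [threeStepPortfolio, ← hcu, ← hcd]
    norm_num
    ring
  rw [e3, key] at h3
  have hw31 : w31 = -cu * K := by
    rw [hw3m1, hw30] at h3
    field_simp at h3
    have h3' : cd * (w31 + cu * K) = 0 := by linarith
    have := (mul_eq_zero.1 h3').resolve_left hcd0
    linarith
  -- E4 : w32
  have h4 := h01 0 1 0 0 0 0 0 0
  have e4 : (fun x : ℝ => threeStepPortfolio u S₀ K ω w11 w20 w21 w22 w3m1 w30 w31 w32 w33 0 0 1 0 0 0 0 x 0)
      = fun x : ℝ => (w30 / (cu * cd) - w31 / cu + w32 / cu ^ 2) * x + threeStepPortfolio u S₀ K ω w11 w20 w21 w22 w3m1 w30 w31 w32 w33 0 0 1 0 0 0 0 0 0 := by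
    funext x
    simp only [threeStepPortfolio, ← hcu, ← hcd]
    norm_num
    ring
  rw [e4, key] at h4
  have hw32 : w32 = -cu ^ 2 * K := by
    rw [hw30, hw31] at h4
    field_simp at h4
    nlinarith [h4]
  -- E5 : w33
  have h5 := hp2 0 0 1 0 0 0 0 0
  have e5L : (fun x : ℝ => threeStepPortfolio u S₀ K ω w11 w20 w21 w22 w3m1 w30 w31 w32 w33 1 0 0 1 0 0 0 0 x)
      = fun x : ℝ => (w31 / (cu * cd) - w32 / cu + w33 / cu ^ 2) * x + threeStepPortfolio u S₀ K ω w11 w20 w21 w22 w3m1 w30 w31 w32 w33 1 0 0 1 0 0 0 0 0 := by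
    funext x
    simp only [threeStepPortfolio, ← hcu, ← hcd]
    norm_num
    ring
  have e5R : (fun x : ℝ => threeStepPortfolio u S₀ K ω w11 w20 w21 w22 w3m1 w30 w31 w32 w33 (-1) 0 0 1 0 0 0 0 x)
      = fun x : ℝ => (0:ℝ) * x + threeStepPortfolio u S₀ K ω w11 w20 w21 w22 w3m1 w30 w31 w32 w33 (-1) 0 0 1 0 0 0 0 0 := by
    funext x
    simp only [threeStepPortfolio, ← hcu, ← hcd]
    norm_num
  rw [e5L, e5R, key, key] at h5
  refine ⟨hw3m1, hw30, ?_, ?_, ?_⟩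
  · rw [hw31, hcu]
  · rw [hw32, hcu]
  · have h5' : w33 / cu ^ 2 = w32 / cu - w31 / (cu * cd) := by linarith
    have h := congrArg (fun z : ℝ => z * cu ^ 2) h5'
    simp only [div_mul_cancel₀ _ (pow_ne_zero 2 hcu0)] at h
    rw [h, hw31, hw32, hcu, hcd, Real.exp_neg, two_mul, Real.exp_add]
    have he : Real.exp u ≠ 0 := (Real.exp_pos u).ne'
    have h1' : (1:ℝ) + Real.exp u ≠ 0 := by positivity
    have h2' : (1:ℝ) + (Real.exp u)⁻¹ ≠ 0 := by positivity
    field_simp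
    ring
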